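/- Let H and Q be real Hilbert spaces, V a real Hilbert space with a continuous linear map ι : V → H, and C : Q → H a continuous linear map. Define N := {w ∈ H : ⟨w, C q⟩_H = 0 for all q ∈ Q}. Let Q₀ be a real normed space and j : Q₀ → Q a continuous linear map. Let (K_n)_{n∈ℕ} be a family of linear subspaces of V satisfying the strong discrete compactness property: for every function φ : ℕ → ℕ and every sequence (v_k) in V with v_k ∈ K_{φ(k)} for all k and sup_k ‖v_k‖_V < ∞, there exist a subsequence (v_{k_j}) and u₀ ∈ N with ‖ι v_{k_j} − u₀‖_H → 0. Then the weak approximability property holds: the quantity sup{ |⟨ι v, C(j p)⟩_H| : p ∈ Q₀ with ‖p‖_{Q₀} ≤ 1, v ∈ K_n with ‖v‖_V ≤ 1 } tends to 0 as n → ∞; equivalently, there is a sequence ω_n → 0 with |⟨ι v, C(j p)⟩_H| ≤ ω_n ‖p‖_{Q₀} ‖v‖_V for all n, p ∈ Q₀ and v ∈ K_n. -/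

import Mathlib

open Filter

/-- Abstract form of the paper's proposition "SDCP implies WA": the strong
discrete compactness property yields the weak approximability of the space of
Lagrange multipliers. -/
theorem sdcp_implies_wa
    {H Q V Q₀ : Type*}
    [NormedAddCommGroup H] [InnerProductSpace ℝ H] [CompleteSpace H]
    [NormedAddCommGroup Q] [InnerProductSpace ℝ Q] [CompleteSpace Q]
    [NormedAddCommGroup V] [InnerProductSpace ℝ V] [CompleteSpace V]
    [NormedAddCommGroup Q₀] [NormedSpace ℝ Q₀]
    (ι : V →L[ℝ] H) (C : Q →L[ℝ] H) (j : Q₀ →L[ℝ] Q)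
    (K : ℕ → Submodule ℝ V)
    (hSDCP : ∀ (φ : ℕ → ℕ) (v : ℕ → V), (∀ k, v k ∈ K (φ k)) →
      (∃ M : ℝ, ∀ k, ‖v k‖ ≤ M) →
      ∃ σ : ℕ → ℕ, StrictMono σ ∧
        ∃ u₀ ∈ {w : H | ∀ q : Q, (inner ℝ w (C q) : ℝ) = 0},
          Tendsto (fun i => ‖ι (v (σ i)) - u₀‖) atTop (nhds 0)) :
    ∃ ω : ℕ → ℝ, Tendsto ω atTop (nhds 0) ∧
      ∀ (n : ℕ) (p : Q₀), ∀ v ∈ K n,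
        |(inner ℝ (ι v) (C (j p)) : ℝ)| ≤ ω n * ‖p‖ * ‖v‖ := by
  classical
  set S : ℕ → Set ℝ := fun n =>
    {r | ∃ p : Q₀, ‖p‖ ≤ 1 ∧ ∃ v ∈ K n, ‖v‖ ≤ 1 ∧
      r = |(inner ℝ (ι v) (C (j p)) : ℝ)|} with hSdef
  have hS0 : ∀ n, (0:ℝ) ∈ S n := by
    intro n
    exact ⟨0, by simp, 0, (K n).zero_mem, by simp, by simp⟩
  have hBdd : ∀ n, BddAbove (S n) := by
    intro n
    refine ⟨‖ι‖ * (‖C‖ * ‖j‖), ?_⟩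
    rintro r ⟨p, hp, v, hv, hv1, rfl⟩
    calc |(inner ℝ (ι v) (C (j p)) : ℝ)| ≤ ‖ι v‖ * ‖C (j p)‖ :=
          abs_real_inner_le_norm _ _
      _ ≤ (‖ι‖ * ‖v‖) * (‖C‖ * (‖j‖ * ‖p‖)) := by
          have h1 : ‖ι v‖ ≤ ‖ι‖ * ‖v‖ := ι.le_opNorm v
          have h2 : ‖C (j p)‖ ≤ ‖C‖ * (‖j‖ * ‖p‖) := by
            calc ‖C (j p)‖ ≤ ‖C‖ * ‖j p‖ := C.le_opNorm _
              _ ≤ ‖C‖ * (‖j‖ * ‖p‖) := by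
                  gcongr; exact j.le_opNorm p
          exact mul_le_mul h1 h2 (norm_nonneg _) (by positivity)
      _ ≤ (‖ι‖ * 1) * (‖C‖ * (‖j‖ * 1)) := by gcongr
      _ = ‖ι‖ * (‖C‖ * ‖j‖) := by ring
  set ω : ℕ → ℝ := fun n => sSup (S n) with hωdef
  have hω0 : ∀ n, 0 ≤ ω n := fun n => le_csSup (hBdd n) (hS0 n)
  have hbound : ∀ (n : ℕ) (p : Q₀), ∀ v ∈ K n,
      |(inner ℝ (ι v) (C (j p)) : ℝ)| ≤ ω n * ‖p‖ * ‖v‖ := by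
    intro n p v hv
    by_cases hp : p = 0
    · simp [hp]
    by_cases hv0 : v = 0
    · simp [hv0]
    have hpn : (0:ℝ) < ‖p‖ := norm_pos_iff.mpr hp
    have hvn : (0:ℝ) < ‖v‖ := norm_pos_iff.mpr hv0
    set p' : Q₀ := ‖p‖⁻¹ • p with hp'
    set v' : V := ‖v‖⁻¹ • v with hv'
    have hv'mem : v' ∈ K n := (K n).smul_mem _ hv
    have hp'n : ‖p'‖ ≤ 1 := by
      rw [hp', norm_smul, norm_inv, norm_norm, inv_mul_cancel₀ hpn.ne']
    have hv'n : ‖v'‖ ≤ 1 := by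
      rw [hv', norm_smul, norm_inv, norm_norm, inv_mul_cancel₀ hvn.ne']
    have hmem : |(inner ℝ (ι v') (C (j p')) : ℝ)| ∈ S n :=
      ⟨p', hp'n, v', hv'mem, hv'n, rfl⟩
    have hle : |(inner ℝ (ι v') (C (j p')) : ℝ)| ≤ ω n := le_csSup (hBdd n) hmem
    have hscale : (inner ℝ (ι v') (C (j p')) : ℝ)
        = ‖v‖⁻¹ * (‖p‖⁻¹ * (inner ℝ (ι v) (C (j p)) : ℝ)) := by
      rw [hp', hv', map_smul, map_smul, map_smul, real_inner_smul_left,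
        real_inner_smul_right]
    have : |(inner ℝ (ι v) (C (j p)) : ℝ)|
        = ‖v‖ * ‖p‖ * |(inner ℝ (ι v') (C (j p')) : ℝ)| := by
      rw [hscale, abs_mul, abs_mul, abs_inv, abs_inv, abs_norm, abs_norm]
      field_simp
    rw [this]
    calc ‖v‖ * ‖p‖ * |(inner ℝ (ι v') (C (j p')) : ℝ)| ≤ ‖v‖ * ‖p‖ * ω n := by
          gcongr
      _ = ω n * ‖p‖ * ‖v‖ := by ring
  refine ⟨ω, ?_, hbound⟩
  by_contra hcon
  rw [Metric.tendsto_atTop] at hcon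
  push_neg at hcon
  obtain ⟨ε, hε, hfreq⟩ := hcon
  have hfreq' : ∃ᶠ n in atTop, ε ≤ ω n := by
    rw [frequently_atTop]
    intro N
    obtain ⟨n, hn, hdist⟩ := hfreq N
    refine ⟨n, hn, ?_⟩
    rw [Real.dist_eq, sub_zero, abs_of_nonneg (hω0 n)] at hdist
    exact hdist
  obtain ⟨φ, hφ, hφω⟩ := extraction_of_frequently_atTop hfreq'
  -- choose p k, v k with ε/2 < |inner ...|
  have hchoice : ∀ k, ∃ p : Q₀, ‖p‖ ≤ 1 ∧ ∃ v ∈ K (φ k), ‖v‖ ≤ 1 ∧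
      ε / 2 < |(inner ℝ (ι v) (C (j p)) : ℝ)| := by
    intro k
    have hlt : ε / 2 < sSup (S (φ k)) :=
      lt_of_lt_of_le (half_lt_self hε) (hφω k)
    obtain ⟨r, hrS, hrlt⟩ := exists_lt_of_lt_csSup ⟨0, hS0 (φ k)⟩ hlt
    obtain ⟨p, hp, v, hvmem, hv1, rfl⟩ := hrS
    exact ⟨p, hp, v, hvmem, hv1, hrlt⟩
  choose p hp v hvmem hv1 hlt using hchoice
  obtain ⟨σ, hσ, u₀, hu₀, htend⟩ := hSDCP φ v hvmem ⟨1, hv1⟩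
  have hbig : ∀ i, ε / 2 < ‖ι (v (σ i)) - u₀‖ * (‖C‖ * ‖j‖) := by
    intro i
    have h0 : (inner ℝ u₀ (C (j (p (σ i)))) : ℝ) = 0 := hu₀ (j (p (σ i)))
    have heq : (inner ℝ (ι (v (σ i))) (C (j (p (σ i)))) : ℝ)
        = (inner ℝ (ι (v (σ i)) - u₀) (C (j (p (σ i)))) : ℝ) := by
      rw [inner_sub_left, h0, sub_zero]
    have h1 : |(inner ℝ (ι (v (σ i)) - u₀) (C (j (p (σ i)))) : ℝ)|
        ≤ ‖ι (v (σ i)) - u₀‖ * (‖C‖ * ‖j‖) := by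
      calc |(inner ℝ (ι (v (σ i)) - u₀) (C (j (p (σ i)))) : ℝ)|
          ≤ ‖ι (v (σ i)) - u₀‖ * ‖C (j (p (σ i)))‖ := abs_real_inner_le_norm _ _
        _ ≤ ‖ι (v (σ i)) - u₀‖ * (‖C‖ * (‖j‖ * ‖p (σ i)‖)) := by
            gcongr
            calc ‖C (j (p (σ i)))‖ ≤ ‖C‖ * ‖j (p (σ i))‖ := C.le_opNorm _
              _ ≤ ‖C‖ * (‖j‖ * ‖p (σ i)‖) := by gcongr; exact j.le_opNorm _
        _ ≤ ‖ι (v (σ i)) - u₀‖ * (‖C‖ * (‖j‖ * 1)) := by gcongr; exact hp _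
        _ = ‖ι (v (σ i)) - u₀‖ * (‖C‖ * ‖j‖) := by ring
    have := hlt (σ i)
    rw [heq] at this
    exact lt_of_lt_of_le this h1
  have htend' : Tendsto (fun i => ‖ι (v (σ i)) - u₀‖ * (‖C‖ * ‖j‖)) atTop
      (nhds 0) := by
    have := htend.mul_const (‖C‖ * ‖j‖)
    simpa using this
  have hev : ∀ᶠ i in atTop, ‖ι (v (σ i)) - u₀‖ * (‖C‖ * ‖j‖) < ε / 2 :=
    htend'.eventually (gt_mem_nhds (half_pos hε))
  obtain ⟨i, hi⟩ := hev.exists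
  exact absurd (hbig i) (not_lt.mpr hi.le)
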